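/- Let A be a real symmetric n×n matrix whose eigenvalue vector λ(A) belongs to Γ_k^+ for some 1 ≤ k ≤ n. Then the Newton transformation T_{k−1}(A) is a positive definite matrix. -/

import Mathlib

/-- The `k`-th elementary symmetric function of `lam = (λ_1, …, λ_n) ∈ ℝ^n`. -/
noncomputable def esymm (n k : ℕ) (lam : Fin n → ℝ) : ℝ :=
  ∑ s ∈ Finset.univ.powersetCard k, ∏ i ∈ s, lam i

/-- The Gårding cone `Γ_k^+ = {λ ∈ ℝ^n : σ_j(λ) > 0 for j = 1, …, k}`. -/
def GammaPlus (n k : ℕ) : Set (Fin n → ℝ) :=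
  {lam | ∀ j : ℕ, 1 ≤ j → j ≤ k → 0 < esymm n j lam}

/-- `σ_k(A)` for a real symmetric matrix `A`: the `k`-th elementary symmetric function
of its eigenvalues (listed with multiplicity). -/
noncomputable def sigmaMat {n : ℕ} (A : Matrix (Fin n) (Fin n) ℝ) (hA : A.IsHermitian)
    (k : ℕ) : ℝ :=
  esymm n k hA.eigenvalues

/-- The `k`-th Newton transformation
`T_k(A) = σ_k(A)·I − σ_{k−1}(A)·A + σ_{k−2}(A)·A² − ⋯ + (−1)^k A^k`. -/
noncomputable def newtonT {n : ℕ} (A : Matrix (Fin n) (Fin n) ℝ) (hA : A.IsHermitian)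
    (k : ℕ) : Matrix (Fin n) (Fin n) ℝ :=
  ∑ j ∈ Finset.range (k + 1), ((-1 : ℝ) ^ j * sigmaMat A hA (k - j)) • A ^ j

namespace Aux
open Multiset Polynomial

open Multiset Polynomial

theorem esymm_cons (s : Multiset ℝ) (a : ℝ) (k : ℕ) :
    (a ::ₘ s).esymm (k+1) = s.esymm (k+1) + a * s.esymm k := by
  simp [Multiset.esymm, Multiset.powersetCard_cons, Multiset.sum_map_mul_left, map_map,
    Function.comp_def]

theorem esymm_zero' (s : Multiset ℝ) : s.esymm 0 = 1 := by simp [Multiset.esymm]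

theorem esymm_one' (s : Multiset ℝ) : s.esymm 1 = s.sum := by
  simp [Multiset.esymm, Multiset.powersetCard_one, map_map, Function.comp_def]

theorem esymm_eq_zero (s : Multiset ℝ) (k : ℕ) (h : Multiset.card s < k) : s.esymm k = 0 := by
  simp [Multiset.esymm, Multiset.powersetCard_eq_empty _ h]

theorem powersetCard_card_self (s : Multiset ℝ) :
    s.powersetCard (Multiset.card s) = {s} := by
  have h1 : Multiset.card (s.powersetCard (Multiset.card s)) = 1 := by simp
  have h2 : ∀ t ∈ s.powersetCard (Multiset.card s), t = s := by
    intro t ht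
    rw [Multiset.mem_powersetCard] at ht
    exact Multiset.eq_of_le_of_card_le ht.1 (le_of_eq ht.2.symm)
  simpa using Multiset.eq_replicate.mpr ⟨h1, h2⟩

theorem esymm_card (s : Multiset ℝ) : s.esymm (Multiset.card s) = s.prod := by
  simp [Multiset.esymm, powersetCard_card_self]

theorem esymm_inv (ρ : Multiset ℝ) (h0 : (0:ℝ) ∉ ρ) :
    ∀ a b : ℕ, a + b = Multiset.card ρ →
      ρ.esymm a = ρ.prod * (ρ.map (·⁻¹)).esymm b := by
  induction ρ using Multiset.induction with
  | empty => intro a b hab; simp at hab; simp [hab.1, hab.2, esymm_zero']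
  | cons x ρ ih =>
    intro a b hab
    have hx : x ≠ 0 := fun h => h0 (by simp [h])
    have h0' : (0:ℝ) ∉ ρ := fun h => h0 (Multiset.mem_cons_of_mem h)
    have hxρ : ρ.prod ≠ 0 := fun h => by
      rcases Multiset.prod_eq_zero_iff.mp h with hm; exact h0' hm
    rw [Multiset.card_cons] at hab
    rw [Multiset.map_cons, Multiset.prod_cons]
    rcases Nat.eq_zero_or_pos a with ha | ha
    · subst ha
      have hb : b = Multiset.card ρ + 1 := by omega
      subst hb
      rw [esymm_zero']
      have : Multiset.card (x⁻¹ ::ₘ ρ.map (·⁻¹)) = Multiset.card ρ + 1 := by simp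
      rw [← this, esymm_card]
      rw [Multiset.prod_cons]
      have : (ρ.map (·⁻¹)).prod = ρ.prod⁻¹ := by
        simpa using Multiset.prod_map_inv (m := ρ) (f := id)
      rw [this]
      field_simp
    · obtain ⟨a', rfl⟩ : ∃ a', a = a' + 1 := ⟨a - 1, by omega⟩
      rcases Nat.eq_zero_or_pos b with hb | hb
      · subst hb
        have hacard : a' + 1 = Multiset.card (x ::ₘ ρ) := by simp; omega
        rw [hacard, esymm_card, esymm_zero', Multiset.prod_cons]
        ring
      · obtain ⟨b', rfl⟩ : ∃ b', b = b' + 1 := ⟨b - 1, by omega⟩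
        rw [esymm_cons, esymm_cons]
        rw [ih h0' (a'+1) b' (by omega), ih h0' a' (b'+1) (by omega)]
        field_simp
        ring

theorem alt_sum_esymm (s : Multiset ℝ) (a : ℝ) (m : ℕ) :
    ∑ j ∈ Finset.range (m+1), (-1:ℝ)^j * (a ::ₘ s).esymm (m - j) * a^j = s.esymm m := by
  induction m with
  | zero => simp [esymm_zero']
  | succ m ih =>
    rw [Finset.sum_range_succ']
    have h1 : ∀ j ∈ Finset.range (m+1),
        (-1:ℝ)^(j+1) * (a ::ₘ s).esymm (m + 1 - (j+1)) * a^(j+1)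
          = -a * ((-1:ℝ)^j * (a ::ₘ s).esymm (m - j) * a^j) := by
      intro j hj
      have : m + 1 - (j+1) = m - j := by omega
      rw [this]; ring
    rw [Finset.sum_congr rfl h1, ← Finset.mul_sum, ih]
    simp only [Nat.sub_zero, pow_zero, one_mul, mul_one]
    rw [esymm_cons]
    ring

theorem pos_right {a b : ℝ} (ha : 0 < a) (h : 0 < a * b) : 0 < b := by
  rcases mul_pos_iff.mp h with ⟨_, hb⟩ | ⟨ha', _⟩
  · exact hb
  · linarith

theorem esymm_two (y : Multiset ℝ) :
    2 * y.esymm 2 = y.sum^2 - (y.map (·^2)).sum := by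
  induction y using Multiset.induction with
  | empty => simp [esymm_eq_zero (0 : Multiset ℝ) 2 (by simp)]
  | cons x y ih =>
    have h2 : (x ::ₘ y).esymm 2 = y.esymm 2 + x * y.esymm 1 := esymm_cons y x 1
    rw [h2, esymm_one', Multiset.sum_cons, Multiset.map_cons, Multiset.sum_cons]
    nlinarith [ih]

/-- Special case of Newton's inequality: a real multiset cannot have
`σ_{j-1} > 0`, `σ_j = 0`, `σ_{j+1} > 0`. -/
theorem newton_special {m j : ℕ} (hj : 1 ≤ j) (hjm : j + 1 ≤ m)
    (ν : Multiset ℝ) (hcard : Multiset.card ν = m)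
    (h1 : 0 < ν.esymm (j-1)) (h2 : ν.esymm j = 0) : ν.esymm (j+1) ≤ 0 := by
  by_contra hpos
  push_neg at hpos
  classical
  set Q : ℝ[X] := (ν.map fun a => X + C a).prod with hQ
  have hmon : ∀ f ∈ ν.map fun a => X + C a, Monic f := by
    intro f hf
    obtain ⟨a, _, rfl⟩ := Multiset.mem_map.mp hf
    exact monic_X_add_C a
  have hQmonic : Q.Monic := monic_multiset_prod_of_monic ν _ (fun a _ => monic_X_add_C a)
  have hdeg : Q.natDegree = m := by
    rw [hQ, natDegree_multiset_prod_of_monic _ hmon]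
    simp [Function.comp_def, hcard]
  have hcoeff : ∀ r ≤ m, Q.coeff (m - r) = ν.esymm r := by
    intro r hr
    rw [hQ, Multiset.prod_X_add_C_coeff ν (by omega), hcard]
    congr 1
    omega
  have hrootsQ : Q.roots = ν.map (fun a => -a) := by
    have : ν.map (fun a => X + C a) = (ν.map fun a => -a).map (fun a => X - C a) := by
      rw [Multiset.map_map]
      apply Multiset.map_congr rfl
      intro a _
      simp [sub_neg_eq_add]
    rw [hQ, this, roots_multiset_prod_X_sub_C]
  have hcardrootsQ : Multiset.card Q.roots = m := by rw [hrootsQ]; simp [hcard]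
  set d := m - (j + 1) with hd
  set r : ℝ[X] := derivative^[d] Q with hr
  -- coefficients of r
  have hrcoeff : ∀ t, r.coeff t = ((t + d).descFactorial d : ℝ) * Q.coeff (t + d) := by
    intro t
    rw [hr, Polynomial.coeff_iterate_derivative, nsmul_eq_mul]
  have hrtop : r.coeff (j+1) = (m.descFactorial d : ℝ) := by
    rw [hrcoeff]
    have : j + 1 + d = m := by omega
    rw [this]
    have : Q.coeff m = 1 := by
      have := hQmonic.leadingCoeff
      rwa [Polynomial.leadingCoeff, hdeg] at this
    rw [this, mul_one]
  have hdf : (0:ℝ) < (m.descFactorial d : ℝ) := by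
    have : 0 < m.descFactorial d := Nat.pos_of_ne_zero (by rw [Ne, Nat.descFactorial_eq_zero_iff_lt]; omega)
    exact_mod_cast this
  have hrdeg : r.natDegree = j + 1 := by
    have hle : r.natDegree ≤ j + 1 := by
      have h' := Polynomial.natDegree_iterate_derivative Q d
      rw [← hr, hdeg] at h'
      omega
    have hge : j + 1 ≤ r.natDegree := le_natDegree_of_ne_zero (by rw [hrtop]; positivity)
    omega
  -- real-rootedness of r
  have hroots_ge : ∀ i, m - i ≤ Multiset.card (derivative^[i] Q).roots := by
    intro i
    induction i with
    | zero => simp [hcardrootsQ]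
    | succ i ih =>
      have := Polynomial.card_roots_le_derivative (derivative^[i] Q)
      rw [Function.iterate_succ_apply']
      omega
  have hcardroots : Multiset.card r.roots = r.natDegree := by
    have h1' := hroots_ge d
    rw [← hr] at h1'
    have h2' := Polynomial.card_roots' r
    rw [hrdeg]
    omega
  -- Vieta for r
  have hlc : r.leadingCoeff = (m.descFactorial d : ℝ) := by
    rw [Polynomial.leadingCoeff, hrdeg, hrtop]
  set ρ : Multiset ℝ := r.roots.map (fun a => -a) with hρ
  have hcardρ : Multiset.card ρ = j + 1 := by rw [hρ]; simp [hcardroots, hrdeg]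
  have hVieta : ∀ t ≤ j + 1, r.coeff t = (m.descFactorial d : ℝ) * ρ.esymm (j + 1 - t) := by
    intro t ht
    rw [Polynomial.coeff_eq_esymm_roots_of_card hcardroots (by omega : t ≤ r.natDegree), hlc,
      hrdeg]
    have : r.roots = ρ.map (fun a => -a) := by
      rw [hρ, Multiset.map_map]
      simp
    rw [this]
    rw [Multiset.esymm_neg]
    ring_nf
    rw [pow_mul', neg_one_sq, one_pow, mul_one]
  -- extract the three esymm values of ρ
  have hE2 : 0 < ρ.esymm (j+1) := by
    have h := hVieta 0 (by omega)
    rw [hrcoeff 0] at h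
    have hq0 : Q.coeff (0 + d) = ν.esymm (j+1) := by
      have : (0 + d) = m - (j+1) := by omega
      rw [this, hcoeff (j+1) (by omega)]
    simp only [Nat.sub_zero] at h
    rw [hq0] at h
    have hdd : (0:ℝ) < ((0 + d).descFactorial d : ℝ) := by
      have : 0 < (0+d).descFactorial d :=
        Nat.pos_of_ne_zero (by rw [Ne, Nat.descFactorial_eq_zero_iff_lt]; omega)
      exact_mod_cast this
    exact pos_right hdf (h ▸ mul_pos hdd hpos)
  have hE1 : ρ.esymm j = 0 := by
    have h := hVieta 1 (by omega)
    rw [hrcoeff 1] at h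
    have hq1 : Q.coeff (1 + d) = ν.esymm j := by
      have : (1 + d) = m - j := by omega
      rw [this, hcoeff j (by omega)]
    rw [hq1, h2, mul_zero] at h
    have : j + 1 - 1 = j := by omega
    rw [this] at h
    have := h.symm
    rcases mul_eq_zero.mp this with h' | h'
    · exact absurd h' (ne_of_gt hdf)
    · exact h'
  have hE0 : 0 < ρ.esymm (j-1) := by
    have h := hVieta 2 (by omega)
    rw [hrcoeff 2] at h
    have hq2 : Q.coeff (2 + d) = ν.esymm (j-1) := by
      have : (2 + d) = m - (j-1) := by omega
      rw [this, hcoeff (j-1) (by omega)]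
    rw [hq2] at h
    have : j + 1 - 2 = j - 1 := by omega
    rw [this] at h
    have hdd : (0:ℝ) < ((2 + d).descFactorial d : ℝ) := by
      have : 0 < (2+d).descFactorial d :=
        Nat.pos_of_ne_zero (by rw [Ne, Nat.descFactorial_eq_zero_iff_lt]; omega)
      exact_mod_cast this
    exact pos_right hdf (h ▸ mul_pos hdd h1)
  -- inverse trick
  have hprod : 0 < ρ.prod := by
    rw [← esymm_card ρ, hcardρ]; exact hE2
  have h0ρ : (0:ℝ) ∉ ρ := by
    intro h0
    have : ρ.prod = 0 := Multiset.prod_eq_zero h0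
    rw [this] at hprod; exact lt_irrefl _ hprod
  set y : Multiset ℝ := ρ.map (·⁻¹) with hy
  have hsum : y.sum = 0 := by
    have := esymm_inv ρ h0ρ j 1 (by omega)
    rw [hE1] at this
    have h' := this.symm
    rw [← esymm_one' y]
    rcases mul_eq_zero.mp h' with h'' | h''
    · exact absurd h'' (ne_of_gt hprod)
    · exact h''
  have he2y : 0 < y.esymm 2 := by
    have := esymm_inv ρ h0ρ (j-1) 2 (by omega)
    rw [this] at hE0
    exact pos_right hprod hE0
  have hsq : 2 * y.esymm 2 = y.sum^2 - (y.map (·^2)).sum := esymm_two y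
  have hnn : 0 ≤ (y.map (·^2)).sum :=
    Multiset.sum_nonneg (by intro z hz; obtain ⟨w, _, rfl⟩ := Multiset.mem_map.mp hz; positivity)
  rw [hsum] at hsq
  nlinarith

theorem esymm_shift (s : Multiset ℝ) (c : ℝ) (j : ℕ) (hj : j ≤ Multiset.card s) :
    (s.map (· + c)).esymm j
      = ∑ m ∈ Finset.range (j+1),
          ((m + (Multiset.card s - j)).choose (Multiset.card s - j) : ℝ)
            * s.esymm (j - m) * c^m := by
  classical
  set N := Multiset.card s with hN
  set Q : ℝ[X] := (s.map fun a => X + C a).prod with hQ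
  have hmon : ∀ f ∈ s.map fun a => X + C a, Monic f := by
    intro f hf
    obtain ⟨a, _, rfl⟩ := Multiset.mem_map.mp hf
    exact monic_X_add_C a
  have hdeg : Q.natDegree = N := by
    rw [hQ, natDegree_multiset_prod_of_monic _ hmon]
    simp [Function.comp_def]
    exact hN.symm
  have hcoeff : ∀ r ≤ N, Q.coeff (N - r) = s.esymm r := by
    intro r hr
    rw [hQ, Multiset.prod_X_add_C_coeff s (by omega)]
    congr 1
    omega
  -- taylor c Q is the generating polynomial of the shifted multiset
  have htay : taylor c Q = ((s.map (· + c)).map fun a => X + C a).prod := by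
    rw [taylor_apply, hQ, multiset_prod_comp]
    rw [Multiset.map_map, Multiset.map_map]
    congr 1
    apply Multiset.map_congr rfl
    intro a _
    simp [add_comp]
    ring
  have hcard' : Multiset.card (s.map (· + c)) = N := by simp; exact hN.symm
  have LHS : (s.map (· + c)).esymm j = (taylor c Q).coeff (N - j) := by
    rw [htay, Multiset.prod_X_add_C_coeff _ (by omega), hcard']
    congr 1
    omega
  rw [LHS, taylor_coeff]
  have hdegh : (hasseDeriv (N - j) Q).natDegree < j + 1 := by
    have := natDegree_hasseDeriv_le Q (N - j)
    omega
  rw [eval_eq_sum_range' hdegh]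
  apply Finset.sum_congr rfl
  intro m hm
  rw [Finset.mem_range] at hm
  rw [hasseDeriv_coeff]
  have h1 : m + (N - j) ≤ N := by omega
  have h2 : m + (N - j) = N - (j - m) := by omega
  rw [h2, hcoeff (j - m) (by omega)]



/-- multiset of the values of `lam` off the index `i` -/
def offM {n : ℕ} (lam : Fin n → ℝ) (i : Fin n) : Multiset ℝ :=
  Multiset.map lam (Finset.univ.erase i).val

theorem esymm_eq_multiset {n : ℕ} (j : ℕ) (mu : Fin n → ℝ) :
    esymm n j mu = (Multiset.map mu Finset.univ.val).esymm j :=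
  (Finset.esymm_map_val mu Finset.univ j).symm

theorem map_univ_cons {n : ℕ} (mu : Fin n → ℝ) (i : Fin n) :
    Multiset.map mu Finset.univ.val = mu i ::ₘ offM mu i := by
  rw [offM, Finset.erase_val, ← Multiset.map_cons]
  congr 1
  exact (Multiset.cons_erase (by simp : i ∈ Finset.univ.val)).symm

theorem card_offM {n : ℕ} (mu : Fin n → ℝ) (i : Fin n) :
    Multiset.card (offM mu i) = n - 1 := by
  rw [offM]
  simp [Finset.card_erase_of_mem]


theorem key (n : ℕ) : ∀ k : ℕ, 1 ≤ k → k ≤ n → ∀ lam : Fin n → ℝ,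
    lam ∈ GammaPlus n k → ∀ i : Fin n, 0 < (offM lam i).esymm (k-1) := by
  intro k
  induction k using Nat.strong_induction_on with
  | _ k IH =>
  intro hk1 hk2 lam hlam i
  -- Sub-claim A : lower elementary symmetric functions of `offM` are positive
  have A : ∀ (mu : Fin n → ℝ), mu ∈ GammaPlus n k → ∀ i' : Fin n, ∀ m, m + 2 ≤ k →
      0 < (offM mu i').esymm m := by
    intro mu hmu i' m hm
    rcases Nat.eq_zero_or_pos m with hm0 | hm0
    · subst hm0; rw [esymm_zero']; norm_num
    · have h1 : m + 1 < k := by omega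
      have := IH (m+1) h1 (by omega) (by omega)
        mu (fun j hj1 hj2 => hmu j hj1 (by omega)) i'
      simpa using this
  rcases Nat.lt_or_ge k 2 with hk2' | hk2'
  · -- k = 1
    have : k = 1 := by omega
    subst this
    rw [Nat.sub_self, esymm_zero']
    norm_num
  -- k ≥ 2 : first, nonvanishing on the cone
  have NV : ∀ (mu : Fin n → ℝ), mu ∈ GammaPlus n k → ∀ i' : Fin n,
      (offM mu i').esymm (k-1) ≠ 0 := by
    intro mu hmu i' hzero
    have hA : 0 < (offM mu i').esymm (k-2) := A mu hmu i' (k-2) (by omega)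
    have hek : 0 < esymm n k mu := hmu k hk1 le_rfl
    rw [esymm_eq_multiset, map_univ_cons mu i'] at hek
    obtain ⟨k', rfl⟩ : ∃ k', k = k' + 1 := ⟨k - 1, by omega⟩
    rw [esymm_cons] at hek
    simp only [Nat.add_sub_cancel] at hzero
    rw [hzero, mul_zero, add_zero] at hek
    rcases Nat.lt_or_ge (k' + 1) n with hlt | hge
    · -- k ≤ n - 1 : Newton's inequality
      have hns := newton_special (m := n - 1) (j := k') (by omega) (by omega)
        (offM mu i') (card_offM mu i') (by simpa using hA) hzero
      linarith
    · -- k = n : too few entries off `i`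
      have hn : n = k' + 1 := by omega
      have : (offM mu i').esymm (k'+1) = 0 := by
        apply esymm_eq_zero
        rw [card_offM]
        omega
      rw [this] at hek
      exact lt_irrefl _ hek
  -- main argument : connect `lam` to a positive vector along the diagonal ray
  by_contra hnp
  push_neg at hnp
  have hneg : (offM lam i).esymm (k-1) < 0 :=
    lt_of_le_of_ne hnp (NV lam hlam i)
  set c₀ : ℝ := 1 + ∑ x : Fin n, |lam x| with hc₀
  have hc₀pos : 0 < c₀ := by
    have : (0:ℝ) ≤ ∑ x : Fin n, |lam x| :=
      Finset.sum_nonneg fun x _ => abs_nonneg _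
    linarith
  have hpos_entries : ∀ x : Fin n, 0 < lam x + c₀ := by
    intro x
    have h1 : |lam x| ≤ ∑ y : Fin n, |lam y| :=
      Finset.single_le_sum (fun y _ => abs_nonneg (lam y)) (Finset.mem_univ x)
    have h2 : -|lam x| ≤ lam x := neg_abs_le _
    rw [hc₀]
    linarith
  set φ : ℝ → ℝ := fun c => ∑ t ∈ (Finset.univ.erase i).powersetCard (k-1),
    ∏ x ∈ t, (lam x + c) with hφ
  have hφeq : ∀ c, φ c = ((offM lam i).map (· + c)).esymm (k-1) := by
    intro c
    show (∑ t ∈ (Finset.univ.erase i).powersetCard (k-1), ∏ x ∈ t, (lam x + c)) = _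
    rw [offM, Multiset.map_map]
    exact (Finset.esymm_map_val ((fun x => x + c) ∘ lam) (Finset.univ.erase i) (k-1)).symm
  have hφ0 : φ 0 < 0 := by
    have : ((offM lam i).map (· + (0:ℝ))) = offM lam i := by
      simp
    rw [hφeq 0, this]
    exact hneg
  have hφc₀ : 0 < φ c₀ := by
    rw [hφ]
    apply Finset.sum_pos
    · intro t ht
      exact Finset.prod_pos fun x _ => hpos_entries x
    · rw [← Finset.card_pos, Finset.card_powersetCard]
      apply Nat.choose_pos
      rw [Finset.card_erase_of_mem (Finset.mem_univ i)]
      simp only [Finset.card_univ, Fintype.card_fin]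
      omega
  have hcont : Continuous φ := by
    rw [hφ]
    exact continuous_finset_sum _ fun t _ =>
      continuous_finset_prod _ fun x _ => (continuous_const.add continuous_id)
  obtain ⟨c, hcmem, hc⟩ : ∃ c ∈ Set.Icc (0:ℝ) c₀, φ c = 0 := by
    have h0mem : (0:ℝ) ∈ Set.Icc (φ 0) (φ c₀) := ⟨le_of_lt hφ0, le_of_lt hφc₀⟩
    have := intermediate_value_Icc (le_of_lt hc₀pos) hcont.continuousOn h0mem
    obtain ⟨c, hcmem, hc⟩ := this
    exact ⟨c, hcmem, hc⟩
  have hcnn : 0 ≤ c := hcmem.1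
  -- the shifted vector is still in the cone
  have hshift_mem : (fun x => lam x + c) ∈ GammaPlus n k := by
    intro j hj1 hj2
    rw [esymm_eq_multiset]
    have : Multiset.map (fun x => lam x + c) Finset.univ.val
        = (Multiset.map lam Finset.univ.val).map (· + c) := by
      rw [Multiset.map_map]
      rfl
    rw [this]
    have hcardfull : Multiset.card (Multiset.map lam Finset.univ.val) = n := by simp
    rw [esymm_shift _ c j (by rw [hcardfull]; omega)]
    apply Finset.sum_pos'
    · intro m hm
      rw [Finset.mem_range] at hm
      apply mul_nonneg
      apply mul_nonneg
      · positivity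
      · rcases Nat.eq_zero_or_pos (j - m) with h0 | h0
        · rw [h0, esymm_zero']; norm_num
        · have := hlam (j-m) h0 (by omega)
          rw [esymm_eq_multiset] at this
          linarith
      · positivity
    · refine ⟨0, Finset.mem_range.mpr (by omega), ?_⟩
      have h1 : (Multiset.map lam Finset.univ.val).esymm (j - 0) = esymm n j lam := by
        rw [Nat.sub_zero, esymm_eq_multiset]
      rw [h1]
      have h2 := hlam j hj1 (by omega)
      have h3 : (0:ℝ) < ((0 + (Multiset.card (Multiset.map lam Finset.univ.val) - j)).choose
          (Multiset.card (Multiset.map lam Finset.univ.val) - j) : ℝ) := by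
        simp
      positivity
  -- contradiction with nonvanishing at the shifted vector
  refine NV _ hshift_mem i ?_
  have hoff : offM (fun x => lam x + c) i = (offM lam i).map (· + c) := by
    rw [offM, offM, Multiset.map_map]
    rfl
  rw [hoff, ← hφeq c]
  exact hc

open Matrix in
theorem posDef_conj {n : ℕ} (U D : Matrix (Fin n) (Fin n) ℝ)
    (hU : U ∈ Matrix.unitaryGroup (Fin n) ℝ) (hD : D.PosDef) :
    (U * D * star U).PosDef := by
  refine Matrix.PosDef.of_dotProduct_mulVec_pos ?_ ?_
  · -- Hermitian
    have hDh := hD.1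
    unfold Matrix.IsHermitian at *
    simp only [Matrix.star_eq_conjTranspose, conjTranspose_mul, conjTranspose_conjTranspose,
      hDh, mul_assoc]
  · intro x hx
    have hUU : U * star U = 1 := (Matrix.mem_unitaryGroup_iff).mp hU
    set y := star U *ᵥ x with hy
    have hyne : y ≠ 0 := by
      intro h0
      apply hx
      have : U *ᵥ y = x := by
        rw [hy, Matrix.mulVec_mulVec, hUU, Matrix.one_mulVec]
      rw [← this, h0, Matrix.mulVec_zero]
    have hq := hD.dotProduct_mulVec_pos hyne
    have h1 : (U * D * star U) *ᵥ x = U *ᵥ (D *ᵥ y) := by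
      rw [hy, Matrix.mulVec_mulVec, Matrix.mulVec_mulVec, mul_assoc]
    rw [h1]
    have h2 : dotProduct (star x) (U *ᵥ (D *ᵥ y)) = dotProduct (star y) (D *ᵥ y) := by
      rw [Matrix.dotProduct_mulVec (star x) U (D *ᵥ y)]
      congr 1
      rw [hy, Matrix.star_mulVec, Matrix.star_eq_conjTranspose, conjTranspose_conjTranspose]
    rw [h2]
    exact hq

open Matrix in
theorem newtonT_diag {n : ℕ} (A : Matrix (Fin n) (Fin n) ℝ) (hA : A.IsHermitian) (m : ℕ) :
    newtonT A hA m =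
      (hA.eigenvectorUnitary : Matrix (Fin n) (Fin n) ℝ)
        * Matrix.diagonal (fun i => ∑ j ∈ Finset.range (m + 1),
            (-1:ℝ)^j * sigmaMat A hA (m - j) * (hA.eigenvalues i)^j)
        * star (hA.eigenvectorUnitary : Matrix (Fin n) (Fin n) ℝ) := by
  set U : Matrix (Fin n) (Fin n) ℝ := (hA.eigenvectorUnitary : Matrix (Fin n) (Fin n) ℝ)
    with hU
  have hUmem : U ∈ Matrix.unitaryGroup (Fin n) ℝ := hA.eigenvectorUnitary.2
  have hUU : star U * U = 1 := mem_unitaryGroup_iff'.mp hUmem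
  have hUU' : U * star U = 1 := mem_unitaryGroup_iff.mp hUmem
  set D : Matrix (Fin n) (Fin n) ℝ := Matrix.diagonal hA.eigenvalues with hD
  have hsp : A = U * D * star U := by
    have h := hA.spectral_theorem
    rwa [RCLike.ofReal_real_eq_id, Function.id_comp] at h
  have hpow : ∀ j : ℕ, A ^ j = U * D ^ j * star U := by
    intro j
    induction j with
    | zero => rw [pow_zero, pow_zero, mul_one, hUU']
    | succ j ih =>
      rw [pow_succ, ih, hsp, pow_succ]
      simp only [mul_assoc]
      rw [← mul_assoc (star U) U, hUU, one_mul]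
  rw [newtonT]
  have hterm : ∀ j ∈ Finset.range (m+1),
      ((-1 : ℝ) ^ j * sigmaMat A hA (m - j)) • A ^ j
        = U * (((-1 : ℝ) ^ j * sigmaMat A hA (m - j)) • D ^ j) * star U := by
    intro j _
    rw [hpow j, mul_smul_comm, smul_mul_assoc]
  rw [Finset.sum_congr rfl hterm, ← Finset.sum_mul, ← Matrix.mul_sum]
  congr 2
  have hdiagj : ∀ j : ℕ, ((-1 : ℝ) ^ j * sigmaMat A hA (m - j)) • D ^ j
      = Matrix.diagonal (fun i => (-1:ℝ)^j * sigmaMat A hA (m - j) * (hA.eigenvalues i)^j) := by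
    intro j
    rw [hD, Matrix.diagonal_pow, ← Matrix.diagonal_smul]
    congr 1
  rw [Finset.sum_congr rfl (fun j _ => hdiagj j)]
  ext i i'
  by_cases hii : i = i'
  · subst hii
    simp [Matrix.sum_apply, Matrix.diagonal_apply_eq]
  · simp [Matrix.sum_apply, Matrix.diagonal_apply_ne _ hii]

end Aux

/-- If the eigenvalue vector of a real symmetric matrix `A` lies in `Γ_k^+`, then the
Newton transformation `T_{k−1}(A)` is positive definite. -/
theorem newtonT_posDef (n k : ℕ) (hk1 : 1 ≤ k) (hk2 : k ≤ n)
    (A : Matrix (Fin n) (Fin n) ℝ) (hA : A.IsHermitian)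
    (h : hA.eigenvalues ∈ GammaPlus n k) :
    (newtonT A hA (k - 1)).PosDef := by
  have hdiag := Aux.newtonT_diag A hA (k-1)
  rw [hdiag]
  apply Aux.posDef_conj _ _ hA.eigenvectorUnitary.2
  rw [Matrix.posDef_diagonal_iff]
  intro i
  -- the diagonal entry is the (k-1)-st elementary symmetric function of the other eigenvalues
  have halt := Aux.alt_sum_esymm (Aux.offM hA.eigenvalues i) (hA.eigenvalues i) (k-1)
  have hterm : ∀ j ∈ Finset.range (k-1+1),
      (-1:ℝ)^j * sigmaMat A hA (k-1-j) * (hA.eigenvalues i)^j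
        = (-1:ℝ)^j * (hA.eigenvalues i ::ₘ Aux.offM hA.eigenvalues i).esymm (k-1-j)
            * (hA.eigenvalues i)^j := by
    intro j _
    rw [sigmaMat, Aux.esymm_eq_multiset, Aux.map_univ_cons]
  rw [Finset.sum_congr rfl hterm, halt]
  exact Aux.key n k hk1 hk2 hA.eigenvalues h i
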